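/- Fix c_i > 0, ε > 0, t_i ∈ ℝ. Let p_ε : [t_i, t_i+ε] → [0,1] solve p_ε'(t) = f(p_ε(t)) + (c_i/ε)·g(p_ε(t)) and let z_ε : [t_i, t_i+ε] → [0,1] solve z_ε'(t) = (c_i/ε)·g(z_ε(t)) with z_ε(t_i) = p_ε(t_i). Let M_f = max_{q∈[0,1]} |f(q)| and let L_g be a Lipschitz constant of g on [0,1]. Then for all t ∈ [t_i, t_i+ε], |z_ε(t) − p_ε(t)| ≤ ε·M_f·exp(c_i L_g). In particular, sup_{t∈[t_i,t_i+ε]} |z_ε(t) − p_ε(t)| → 0 as ε → 0. -/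

import Mathlib

open Filter

lemma gronwallBound_aux {κ Mf ε x : ℝ} (hκ : 0 ≤ κ) (hMf : 0 ≤ Mf) (hx0 : 0 ≤ x)
    (hxε : x ≤ ε) : gronwallBound 0 κ Mf x ≤ ε * Mf * Real.exp (κ * ε) := by
  have hε : 0 ≤ ε := hx0.trans hxε
  rcases eq_or_lt_of_le hκ with h0 | hκpos
  · rw [← h0]
    rw [gronwallBound_K0]
    simp only [zero_mul, Real.exp_zero]
    nlinarith
  · rw [gronwallBound_of_K_ne_0 (ne_of_gt hκpos)]
    simp only [zero_mul, zero_add]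
    -- e^y - 1 ≤ y * e^y for y ≥ 0
    have key : ∀ y : ℝ, 0 ≤ y → Real.exp y - 1 ≤ y * Real.exp y := by
      intro y hy
      have h1 : 1 - y ≤ Real.exp (-y) := by linarith [Real.add_one_le_exp (-y)]
      rw [Real.exp_neg] at h1
      have h2 := Real.exp_pos y
      rw [inv_eq_one_div] at h1
      rw [le_div_iff₀ h2] at h1
      nlinarith
    have hmono : Real.exp (κ * x) ≤ Real.exp (κ * ε) :=
      Real.exp_le_exp.mpr (by nlinarith)
    have h3 : Real.exp (κ * x) - 1 ≤ Real.exp (κ * ε) - 1 := by linarith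
    have h4 : Real.exp (κ * ε) - 1 ≤ κ * ε * Real.exp (κ * ε) :=
      key _ (by positivity)
    have h5 : Mf / κ * (Real.exp (κ * x) - 1) ≤ Mf / κ * (κ * ε * Real.exp (κ * ε)) := by
      apply mul_le_mul_of_nonneg_left (h3.trans h4) (by positivity)
    calc Mf / κ * (Real.exp (κ * x) - 1) ≤ Mf / κ * (κ * ε * Real.exp (κ * ε)) := h5
      _ = ε * Mf * Real.exp (κ * ε) := by field_simp

/-- comparison of `p_ε` with the auxiliary solution `z_ε` of
`z_ε' = (c_i/ε) g(z_ε)` with the same value at `t_i`: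
`|z_ε(t) − p_ε(t)| ≤ ε M_f exp(c_i L_g)` on `[t_i, t_i+ε]`, hence the sup of the
difference tends to `0` as `ε → 0⁺`. -/
theorem comparison_with_pure_jump_solution
    (bM0 bW0 dM dW K sh : ℝ)
    (hbM0 : 0 < bM0) (hbW0 : 0 < bW0) (hdM : 0 < dM) (hdW : 0 < dW) (hK : 0 < K)
    (hsh0 : 0 < sh) (hsh1 : sh ≤ 1)
    (f g : ℝ → ℝ)
    (hf : f = fun x => x * (1 - x) * (dM * bW0 - dW * bM0 * (1 - sh * x)) /
      (bM0 * (1 - x) * (1 - sh * x) + bW0 * x))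
    (hg : g = fun x => (1 / K) * (bM0 * (1 - x) * (1 - sh * x)) /
      (bM0 * (1 - x) * (1 - sh * x) + bW0 * x))
    (ci ti : ℝ) (hci : 0 < ci)
    (Mf : ℝ) (hMf : ∀ q ∈ Set.Icc (0 : ℝ) 1, |f q| ≤ Mf)
    (Lg : NNReal) (hLg : LipschitzOnWith Lg g (Set.Icc (0 : ℝ) 1))
    (P Z : ℝ → ℝ → ℝ)
    (hrange : ∀ ε > (0 : ℝ), ∀ t ∈ Set.Icc ti (ti + ε),
      P ε t ∈ Set.Icc (0 : ℝ) 1 ∧ Z ε t ∈ Set.Icc (0 : ℝ) 1)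
    (hP : ∀ ε > (0 : ℝ), ∀ t ∈ Set.Icc ti (ti + ε),
      HasDerivWithinAt (P ε) (f (P ε t) + (ci / ε) * g (P ε t))
        (Set.Icc ti (ti + ε)) t)
    (hZ : ∀ ε > (0 : ℝ), ∀ t ∈ Set.Icc ti (ti + ε),
      HasDerivWithinAt (Z ε) ((ci / ε) * g (Z ε t)) (Set.Icc ti (ti + ε)) t)
    (hinit : ∀ ε > (0 : ℝ), Z ε ti = P ε ti) :
    (∀ ε > (0 : ℝ), ∀ t ∈ Set.Icc ti (ti + ε),
      |Z ε t - P ε t| ≤ ε * Mf * Real.exp (ci * Lg)) ∧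
    Tendsto (fun ε => ⨆ t ∈ Set.Icc ti (ti + ε), |Z ε t - P ε t|)
      (nhdsWithin 0 (Set.Ioi 0)) (nhds 0) := by
  have hMf0 : 0 ≤ Mf := le_trans (abs_nonneg _) (hMf 0 ⟨le_rfl, zero_le_one⟩)
  have main : ∀ ε > (0 : ℝ), ∀ t ∈ Set.Icc ti (ti + ε),
      |Z ε t - P ε t| ≤ ε * Mf * Real.exp (ci * Lg) := by
    intro ε hε t ht
    -- the vector field and its Lipschitz constant
    set K' : NNReal := (ci / ε).toNNReal * Lg with hK'
    have hcε : (0 : ℝ) ≤ ci / ε := le_of_lt (div_pos hci hε)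
    have hK'coe : (K' : ℝ) = (ci / ε) * Lg := by
      simp [hK', Real.coe_toNNReal _ hcε]
    have hv : ∀ s : ℝ, LipschitzOnWith K' (fun x => (ci / ε) * g x) (Set.Icc (0:ℝ) 1) := by
      intro s
      rw [lipschitzOnWith_iff_dist_le_mul]
      intro x hx y hy
      have := (lipschitzOnWith_iff_dist_le_mul.mp hLg) x hx y hy
      calc dist ((ci/ε) * g x) ((ci/ε) * g y) = (ci/ε) * dist (g x) (g y) := by
            rw [Real.dist_eq, Real.dist_eq, ← mul_sub, abs_mul, abs_of_nonneg hcε]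
        _ ≤ (ci/ε) * ((Lg : ℝ) * dist x y) := by
            exact mul_le_mul_of_nonneg_left this hcε
        _ = (K' : ℝ) * dist x y := by rw [hK'coe]; ring
    have hmem : ∀ s ∈ Set.Ico ti (ti + ε), s ∈ Set.Icc ti (ti + ε) :=
      fun s hs => ⟨hs.1, le_of_lt hs.2⟩
    -- derivatives within Ici
    have hderiv : ∀ (F : ℝ → ℝ) (d : ℝ → ℝ),
        (∀ s ∈ Set.Icc ti (ti + ε), HasDerivWithinAt F (d s) (Set.Icc ti (ti + ε)) s) →
        ∀ s ∈ Set.Ico ti (ti + ε), HasDerivWithinAt F (d s) (Set.Ici s) s := by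
      intro F d hF s hs
      exact (hF s (hmem s hs)).mono_of_mem_nhdsWithin (Icc_mem_nhdsGE_of_mem ⟨hs.1, hs.2⟩)
    have hcontZ : ContinuousOn (Z ε) (Set.Icc ti (ti + ε)) :=
      fun s hs => (hZ ε hε s hs).continuousWithinAt
    have hcontP : ContinuousOn (P ε) (Set.Icc ti (ti + ε)) :=
      fun s hs => (hP ε hε s hs).continuousWithinAt
    have key := dist_le_of_approx_trajectories_ODE_of_mem
      (v := fun _ x => (ci / ε) * g x) (s := fun _ => Set.Icc (0:ℝ) 1)
      (f := Z ε) (g := P ε)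
      (f' := fun s => (ci / ε) * g (Z ε s)) (g' := fun s => f (P ε s) + (ci / ε) * g (P ε s))
      (εf := 0) (εg := Mf) (δ := 0) (a := ti) (b := ti + ε)
      (fun s _ => hv s) hcontZ (hderiv _ _ (hZ ε hε))
      (fun s hs => by simp [dist_self])
      (fun s hs => (hrange ε hε s (hmem s hs)).2)
      hcontP (hderiv _ _ (hP ε hε))
      (fun s hs => by
        have := hMf (P ε s) (hrange ε hε s (hmem s hs)).1
        rw [Real.dist_eq]
        simpa using this)
      (fun s hs => (hrange ε hε s (hmem s hs)).1)
      (by rw [hinit ε hε]; simp)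
      t ht
    rw [Real.dist_eq] at key
    refine key.trans ?_
    have : gronwallBound 0 (K' : ℝ) (0 + Mf) (t - ti) ≤
        ε * Mf * Real.exp ((K' : ℝ) * ε) := by
      rw [zero_add]
      exact gronwallBound_aux (K'.coe_nonneg) hMf0 (by linarith [ht.1]) (by linarith [ht.2])
    refine this.trans_eq ?_
    rw [hK'coe]
    have heq : ci / ε * (Lg:ℝ) * ε = ci * Lg := by
      field_simp
    rw [heq]
  refine ⟨main, ?_⟩
  have hb : Tendsto (fun ε : ℝ => ε * Mf * Real.exp (ci * Lg))
      (nhdsWithin 0 (Set.Ioi 0)) (nhds 0) := by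
    have hcont : Continuous (fun ε : ℝ => ε * Mf * Real.exp (ci * Lg)) := by
      continuity
    have h0 := hcont.tendsto 0
    simp only [zero_mul] at h0
    exact h0.mono_left nhdsWithin_le_nhds
  refine tendsto_of_tendsto_of_tendsto_of_le_of_le' tendsto_const_nhds hb ?_ ?_
  · filter_upwards [self_mem_nhdsWithin] with ε hε
    exact Real.iSup_nonneg fun t => Real.iSup_nonneg fun _ => abs_nonneg _
  · filter_upwards [self_mem_nhdsWithin] with ε hε
    have hbnd : 0 ≤ ε * Mf * Real.exp (ci * Lg) := by
      have : (0:ℝ) < ε := hε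
      positivity
    exact Real.iSup_le (fun t => Real.iSup_le (fun ht => main ε hε t ht) hbnd) hbnd
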